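/- Let T be a positively edge-weighted tree with m vertices, taxa X the set of leaves of T with |X| = n, and square root embedding Ψ into ℝ^{m-1}. Then the distance matrix D with D_{ij} = d(x_i, x_j) (tree distances between leaves) has the property that H = -(1/2) F D F is positive semidefinite, where F = I_n - (1/n)𝟙𝟙ᵀ. -/

import Mathlib

open SimpleGraph Matrix

/-- The unique path between two vertices of a tree, as a walk. -/
noncomputable def treePath {V : Type*} (G : SimpleGraph V) (hG : G.IsTree) (a b : V) :
    G.Walk a b :=
  (hG.existsUnique_path a b).choose

/-- The square root embedding with base node `v`: the coordinate of `Ψ_v u` at edge `e`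
is `√(w e)` if `e` lies on the path from `v` to `u`, and `0` otherwise. -/
noncomputable def sqrtEmbed {V : Type*} [DecidableEq V] (G : SimpleGraph V) (hG : G.IsTree)
    [Fintype G.edgeSet] (w : Sym2 V → ℝ) (v u : V) : EuclideanSpace ℝ G.edgeSet :=
  WithLp.toLp 2 (fun e : G.edgeSet => if (e : Sym2 V) ∈ (treePath G hG v u).edges then Real.sqrt (w e) else 0)

/-- The tree metric: sum of the weights of the edges on the unique path. -/
noncomputable def treeDist {V : Type*} (G : SimpleGraph V) (hG : G.IsTree)
    (w : Sym2 V → ℝ) (a b : V) : ℝ :=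
  ((treePath G hG a b).edges.map w).sum

/- ======================= auxiliary lemmas ======================= -/

lemma treePath_isPath {V : Type*} (G : SimpleGraph V) (hG : G.IsTree) (a b : V) :
    (treePath G hG a b).IsPath := (hG.existsUnique_path a b).choose_spec.1

lemma treePath_unique {V : Type*} (G : SimpleGraph V) (hG : G.IsTree) {a b : V}
    (p : G.Walk a b) (hp : p.IsPath) : p = treePath G hG a b :=
  (hG.existsUnique_path a b).choose_spec.2 p hp

lemma mem_treePath_iff {V : Type*} [DecidableEq V] (G : SimpleGraph V) (hG : G.IsTree)
    (e : Sym2 V) (a b : V) :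
    e ∈ (treePath G hG a b).edges ↔ ¬ (G.deleteEdges {e}).Reachable a b := by
  constructor
  · intro hmem hreach
    obtain ⟨q⟩ := hreach
    have hq : ∀ f ∈ (q.toPath : (G.deleteEdges {e}).Walk a b).edges, f ∈ G.edgeSet := by
      intro f hf
      have := (q.toPath : (G.deleteEdges {e}).Walk a b).edges_subset_edgeSet hf
      rw [edgeSet_deleteEdges] at this
      exact this.1
    have hne : e ∉ ((q.toPath : (G.deleteEdges {e}).Walk a b).transfer G hq).edges := by
      rw [SimpleGraph.Walk.edges_transfer]
      intro hmem'
      have := (q.toPath : (G.deleteEdges {e}).Walk a b).edges_subset_edgeSet hmem'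
      rw [edgeSet_deleteEdges] at this
      exact this.2 rfl
    have := treePath_unique G hG _ ((q.toPath.2).transfer hq)
    rw [this] at hne
    exact hne hmem
  · intro hreach
    by_contra hmem
    refine hreach ⟨(treePath G hG a b).transfer (G.deleteEdges {e}) ?_⟩
    intro f hf
    rw [edgeSet_deleteEdges]
    refine ⟨(treePath G hG a b).edges_subset_edgeSet hf, ?_⟩
    simp only [Set.mem_singleton_iff]
    rintro rfl
    exact hmem hf

lemma reach_side_aux {V : Type*} [DecidableEq V] {G : SimpleGraph V} {u u' z : V}
    (p : G.Walk u z) (hp : p.IsPath) (hmem : s(u, u') ∈ p.edges) :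
    (G.deleteEdges {s(u, u')}).Reachable u' z := by
  cases p with
  | nil => simp at hmem
  | cons h q =>
    rename_i c
    rw [SimpleGraph.Walk.edges_cons, List.mem_cons] at hmem
    rw [SimpleGraph.Walk.cons_isPath_iff] at hp
    rcases hmem with h1 | h2
    · have hc : u' = c := by
        rw [Sym2.eq_iff] at h1
        rcases h1 with ⟨-, rfl⟩ | ⟨rfl, -⟩
        · rfl
        · exact absurd rfl h.ne
      subst hc
      have hq : ∀ f ∈ q.edges, f ∈ (G.deleteEdges {s(u, u')}).edgeSet := by
        intro f hf
        rw [edgeSet_deleteEdges]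
        refine ⟨q.edges_subset_edgeSet hf, ?_⟩
        simp only [Set.mem_singleton_iff]
        rintro rfl
        exact hp.2 (q.fst_mem_support_of_mem_edges hf)
      exact ⟨q.transfer _ hq⟩
    · exact absurd (q.fst_mem_support_of_mem_edges h2) hp.2

lemma reach_side {V : Type*} [DecidableEq V] (G : SimpleGraph V) (hG : G.IsTree)
    {u u' : V} (z : V) :
    (G.deleteEdges {s(u, u')}).Reachable u z ∨ (G.deleteEdges {s(u, u')}).Reachable u' z := by
  by_cases hmem : s(u, u') ∈ (treePath G hG u z).edges
  · exact Or.inr (reach_side_aux _ (treePath_isPath G hG u z) hmem)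
  · left
    rw [mem_treePath_iff] at hmem
    exact not_not.mp hmem

lemma reach_of_not_of_not {V : Type*} [DecidableEq V] (G : SimpleGraph V) (hG : G.IsTree)
    (e : Sym2 V) {v a b : V}
    (ha : ¬ (G.deleteEdges {e}).Reachable v a) (hb : ¬ (G.deleteEdges {e}).Reachable v b) :
    (G.deleteEdges {e}).Reachable a b := by
  induction e using Sym2.ind with
  | _ u u' =>
    rcases reach_side G hG (u := u) (u' := u') v with hv | hv
    · rcases reach_side G hG (u := u) (u' := u') a with h1 | h1
      · exact absurd (hv.symm.trans h1) ha
      · rcases reach_side G hG (u := u) (u' := u') b with h2 | h2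
        · exact absurd (hv.symm.trans h2) hb
        · exact h1.symm.trans h2
    · rcases reach_side G hG (u := u) (u' := u') a with h1 | h1
      · rcases reach_side G hG (u := u) (u' := u') b with h2 | h2
        · exact h1.symm.trans h2
        · exact absurd (hv.symm.trans h2) hb
      · exact absurd (hv.symm.trans h1) ha

open scoped Classical in
/-- Indicator (as a real number) that `z` lies on the far side of the edge `e` from `v`. -/
noncomputable def chi {V : Type*} (G : SimpleGraph V) (v : V) (e : Sym2 V) (z : V) : ℝ :=
  if (G.deleteEdges {e}).Reachable v z then 0 else 1

lemma chi_key {V : Type*} [DecidableEq V] (G : SimpleGraph V) (hG : G.IsTree)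
    (v : V) (e : Sym2 V) (a b : V) :
    (chi G v e a - chi G v e b) ^ 2
      = if e ∈ (treePath G hG a b).edges then 1 else 0 := by
  classical
  unfold chi
  rw [if_congr (mem_treePath_iff G hG e a b) rfl rfl]
  by_cases h1 : (G.deleteEdges {e}).Reachable v a <;>
    by_cases h2 : (G.deleteEdges {e}).Reachable v b <;>
    simp only [h1, h2, if_true, if_false]
  · rw [if_neg (not_not.mpr (h1.symm.trans h2))]; ring
  · rw [if_pos (fun hr => h2 (h1.trans hr))]; ring
  · rw [if_pos (fun hr => h1 (h2.trans hr.symm))]; ring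
  · rw [if_neg (not_not.mpr (reach_of_not_of_not G hG e h1 h2))]; ring

lemma listSum {V : Type*} [DecidableEq V] (G : SimpleGraph V) [Fintype G.edgeSet]
    (w : Sym2 V → ℝ) (L : List (Sym2 V)) (hnd : L.Nodup) (hsub : ∀ s ∈ L, s ∈ G.edgeSet) :
    ∑ e : G.edgeSet, (if (e : Sym2 V) ∈ L then w e else 0) = (L.map w).sum := by
  classical
  rw [← Finset.sum_subtype G.edgeSet.toFinset (by simp) (fun s => if s ∈ L then w s else 0)]
  rw [← Finset.sum_filter]
  have hfe : G.edgeSet.toFinset.filter (fun s => s ∈ L) = L.toFinset := by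
    ext s
    simp only [Finset.mem_filter, Set.mem_toFinset, List.mem_toFinset]
    exact ⟨fun h => h.2, fun h => ⟨hsub s h, h⟩⟩
  rw [hfe, List.sum_toFinset w hnd]

lemma dist_eq_chi {V : Type*} [DecidableEq V] (G : SimpleGraph V) (hG : G.IsTree)
    [Fintype G.edgeSet] (w : Sym2 V → ℝ) (v a b : V) :
    treeDist G hG w a b
      = ∑ e : G.edgeSet, w e * (chi G v e a - chi G v e b) ^ 2 := by
  classical
  have : ∀ e : G.edgeSet, w e * (chi G v (e : Sym2 V) a - chi G v e b) ^ 2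
      = if (e : Sym2 V) ∈ (treePath G hG a b).edges then w e else 0 := by
    intro e
    rw [chi_key G hG v e a b, mul_ite, mul_one, mul_zero]
  rw [Finset.sum_congr rfl fun e _ => this e,
    listSum G w _ ((treePath_isPath G hG a b).edges_nodup)
      (fun s hs => (treePath G hG a b).edges_subset_edgeSet hs)]
  rfl

lemma quadSum {n : ℕ} (z a : Fin n → ℝ) (hz : ∑ i, z i = 0) :
    ∑ i, ∑ j, z i * z j * (a i - a j) ^ 2 = -2 * (∑ i, z i * a i) ^ 2 := by
  have inner : ∀ i, ∑ j, z i * z j * (a i - a j) ^ 2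
      = z i * (∑ j, z j * a j ^ 2) - (z i * a i) * (2 * ∑ j, z j * a j) := by
    intro i
    have h : ∀ j, z i * z j * (a i - a j) ^ 2
        = z i * a i ^ 2 * z j + z i * (z j * a j ^ 2) - (z i * a i) * (2 * (z j * a j)) :=
      fun j => by ring
    rw [Finset.sum_congr rfl fun j _ => h j, Finset.sum_sub_distrib, Finset.sum_add_distrib,
      ← Finset.mul_sum, ← Finset.mul_sum, ← Finset.mul_sum, hz, mul_zero, zero_add,
      ← Finset.mul_sum]
  rw [Finset.sum_congr rfl fun i _ => inner i, Finset.sum_sub_distrib,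
    ← Finset.sum_mul, ← Finset.sum_mul, hz, zero_mul, zero_sub]
  ring

/-- for the matrix `D` of tree distances between the `n` leaves of a
positively edge-weighted tree, the doubly centered matrix `H = -(1/2) F D F` is positive
semidefinite. -/
theorem tree_mds_posSemidef {V : Type*} [DecidableEq V] (G : SimpleGraph V) (hG : G.IsTree)
    [Fintype G.edgeSet] (w : Sym2 V → ℝ) (hw : ∀ e ∈ G.edgeSet, 0 < w e)
    (n : ℕ) (hn : 0 < n) (x : Fin n → V) (hinj : Function.Injective x)
    (hleaf : Set.range x = {u : V | ∃! u' : V, G.Adj u u'})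
    (D F H : Matrix (Fin n) (Fin n) ℝ)
    (hD : ∀ i j, D i j = treeDist G hG w (x i) (x j))
    (hF : F = 1 - (n : ℝ)⁻¹ • Matrix.of (fun _ _ => (1 : ℝ)))
    (hH : H = (-(1 / 2) : ℝ) • (F * D * F)) :
    H.PosSemidef := by
  classical
  set v : V := x ⟨0, hn⟩ with hv
  -- D in terms of chi
  have hDchi : ∀ i j, D i j
      = ∑ e : G.edgeSet, w e * (chi G v e (x i) - chi G v e (x j)) ^ 2 := by
    intro i j
    rw [hD i j, dist_eq_chi G hG w v (x i) (x j)]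
  -- symmetry
  have hDsymm : D.IsSymm := by
    ext i j
    rw [Matrix.transpose_apply, hDchi i j, hDchi j i]
    congr 1
    ext e
    ring
  have hFsymm : F.IsSymm := by
    rw [hF]
    ext i j
    simp [Matrix.transpose_apply, Matrix.one_apply, eq_comm]
  have hHsymm : H.IsSymm := by
    rw [hH]
    unfold Matrix.IsSymm
    rw [Matrix.transpose_smul, Matrix.transpose_mul, Matrix.transpose_mul, hFsymm.eq,
      hDsymm.eq, Matrix.mul_assoc]
  rw [Matrix.posSemidef_iff_dotProduct_mulVec]
  constructor
  · rw [Matrix.IsHermitian, Matrix.conjTranspose_eq_transpose_of_trivial]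
    exact hHsymm
  · intro y
    set z : Fin n → ℝ := F *ᵥ y with hzdef
    have hzi : ∀ i, z i = y i - (n : ℝ)⁻¹ * ∑ j, y j := by
      intro i
      simp [hzdef, hF, Matrix.sub_mulVec, Matrix.one_mulVec, Matrix.smul_mulVec,
        Matrix.mulVec, dotProduct, Finset.mul_sum]
    have hzsum : ∑ i, z i = 0 := by
      rw [Finset.sum_congr rfl fun i _ => hzi i, Finset.sum_sub_distrib,
        Finset.sum_const, Finset.card_univ, Fintype.card_fin]
      have hn' : (n : ℝ) ≠ 0 := Nat.cast_ne_zero.mpr hn.ne'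
      rw [nsmul_eq_mul, mul_inv_cancel_left₀ hn', sub_self]
    -- the quadratic form
    have hmv : H *ᵥ y = (-(1 / 2) : ℝ) • (F *ᵥ (D *ᵥ z)) := by
      rw [hH, Matrix.smul_mulVec, hzdef, Matrix.mulVec_mulVec, Matrix.mulVec_mulVec]
    have hdot : star y ⬝ᵥ (H *ᵥ y) = (-(1 / 2) : ℝ) * (z ⬝ᵥ (D *ᵥ z)) := by
      rw [hmv, dotProduct_smul, star_trivial, smul_eq_mul,
        Matrix.dotProduct_mulVec y F, ← hFsymm.eq, Matrix.vecMul_transpose, ← hzdef]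
    rw [hdot]
    have hquad : z ⬝ᵥ (D *ᵥ z)
        = ∑ e : G.edgeSet, w e * (-2 * (∑ i, z i * chi G v e (x i)) ^ 2) := by
      have h1 : z ⬝ᵥ (D *ᵥ z) = ∑ i, ∑ j, z i * z j * D i j := by
        simp [dotProduct, Matrix.mulVec, Finset.mul_sum, mul_assoc, mul_comm,
          mul_left_comm]
      rw [h1]
      have h2 : ∀ i j, z i * z j * D i j
          = ∑ e : G.edgeSet, w e * (z i * z j * (chi G v e (x i) - chi G v e (x j)) ^ 2) := by
        intro i j
        rw [hDchi i j, Finset.mul_sum]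
        congr 1
        ext e
        ring
      rw [Finset.sum_congr rfl fun i _ => Finset.sum_congr rfl fun j _ => h2 i j]
      rw [Finset.sum_congr rfl fun i _ => Finset.sum_comm, Finset.sum_comm]
      refine Finset.sum_congr rfl fun e _ => ?_
      simp_rw [← Finset.mul_sum]
      congr 1
      exact quadSum z (fun i => chi G v (e : Sym2 V) (x i)) hzsum
    rw [hquad]
    have hnonpos : ∑ e : G.edgeSet, w e * (-2 * (∑ i, z i * chi G v (e : Sym2 V) (x i)) ^ 2) ≤ 0 := by
      refine Finset.sum_nonpos fun e _ => ?_
      refine mul_nonpos_iff.mpr (Or.inl ⟨(hw e e.2).le, ?_⟩)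
      nlinarith [sq_nonneg (∑ i, z i * chi G v (e : Sym2 V) (x i))]
    linarith
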